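/- arXiv:2603.08929 — 3 statements merged into one kernel-verified Lean document; each statement's English description precedes it below -/
import Mathlib

section
/- Binary MSB radix sort is correct: define sortBits w l by recursion on w, where sortBits 0 l = l and sortBits (w+1) l first stably partitions l by bit w (clear group first) and then applies sortBits w to each group and concatenates; then for any list l of natural numbers all less than 2^w, sortBits w l is a sorted permutation of l. -/
def sortBits : ℕ → List ℕ → List ℕ
  | 0, l => l
  | (w + 1), l =>
      sortBits w (l.filter (fun a => !a.testBit w)) ++
      sortBits w (l.filter (fun a => a.testBit w))

lemma shiftRight_succ_decomp (x w : ℕ) :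
    x >>> w = 2 * (x >>> (w + 1)) + (x.testBit w).toNat := by
  have h1 : x >>> (w + 1) = (x >>> w) / 2 := Nat.shiftRight_succ x w
  have h2 : x.testBit w = decide ((x >>> w) % 2 = 1) := by
    rw [Nat.testBit_eq_decide_div_mod_eq, Nat.shiftRight_eq_div_pow]
  rcases Nat.mod_two_eq_zero_or_one (x >>> w) with h | h <;>
    simp [h1, h2, h] <;> omega

lemma shiftRight_eq_of {x y w : ℕ} (hs : x >>> (w + 1) = y >>> (w + 1))
    (hb : x.testBit w = y.testBit w) : x >>> w = y >>> w := by
  have dx := shiftRight_succ_decomp x w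
  have dy := shiftRight_succ_decomp y w
  rw [hb] at dx
  omega

lemma lt_of_high_eq {x y w : ℕ} (hs : x >>> (w + 1) = y >>> (w + 1))
    (hx : x.testBit w = false) (hy : y.testBit w = true) : x < y := by
  apply Nat.lt_of_testBit w hx hy
  intro j hj
  have : j = (w + 1) + (j - (w + 1)) := by omega
  rw [this, ← Nat.testBit_shiftRight, ← Nat.testBit_shiftRight, hs]

lemma sortBits_aux (w : ℕ) : ∀ l : List ℕ, (∀ x ∈ l, ∀ y ∈ l, x >>> w = y >>> w) →
    (sortBits w l).Pairwise (· ≤ ·) ∧ (sortBits w l).Perm l := by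
  induction w with
  | zero =>
    intro l h
    refine ⟨?_, List.Perm.refl _⟩
    simp only [sortBits]
    exact List.pairwise_of_forall_mem_list fun a ha b hb =>
      le_of_eq (by simpa using h a ha b hb)
  | succ w ih =>
    intro l h
    set l0 := l.filter (fun a => !a.testBit w) with hl0
    set l1 := l.filter (fun a => a.testBit w) with hl1
    have h0 : ∀ x ∈ l0, ∀ y ∈ l0, x >>> w = y >>> w := by
      intro x hx y hy
      rw [hl0, List.mem_filter] at hx hy
      simp only [Bool.not_eq_true'] at hx hy
      exact shiftRight_eq_of (h x hx.1 y hy.1) (hx.2.trans hy.2.symm)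
    have h1 : ∀ x ∈ l1, ∀ y ∈ l1, x >>> w = y >>> w := by
      intro x hx y hy
      rw [hl1, List.mem_filter] at hx hy
      exact shiftRight_eq_of (h x hx.1 y hy.1) (hx.2.trans hy.2.symm)
    obtain ⟨s0, p0⟩ := ih l0 h0
    obtain ⟨s1, p1⟩ := ih l1 h1
    constructor
    · apply List.pairwise_append.mpr
      refine ⟨s0, s1, ?_⟩
      intro x hx y hy
      have hx' := p0.mem_iff.mp hx
      have hy' := p1.mem_iff.mp hy
      rw [hl0, List.mem_filter] at hx'
      rw [hl1, List.mem_filter] at hy'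
      simp only [Bool.not_eq_true'] at hx'
      exact le_of_lt (lt_of_high_eq (h x hx'.1 y hy'.1) hx'.2 hy'.2)
    · show (sortBits w l0 ++ sortBits w l1).Perm l
      have hp : (l0 ++ l1).Perm l := by
        have := List.filter_append_perm (fun a => !a.testBit w) l
        simpa [Bool.not_not] using this
      exact (List.Perm.append p0 p1).trans hp

theorem stmt_9 (w : ℕ) (l : List ℕ) (hl : ∀ x ∈ l, x < 2 ^ w) :
    (sortBits w l).Pairwise (· ≤ ·) ∧ (sortBits w l).Perm l := by
  apply sortBits_aux
  intro x hx y hy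
  rw [Nat.shiftRight_eq_div_pow, Nat.shiftRight_eq_div_pow,
    Nat.div_eq_of_lt (hl x hx), Nat.div_eq_of_lt (hl y hy)]
end

section
/- If a list l of natural numbers all less than 2^(w+1) is split into l₀ (elements with bit w clear) and l₁ (elements with bit w set), and s₀, s₁ are sorted permutations of l₀ and l₁ respectively, then s₀ ++ s₁ is a sorted permutation of l. -/
theorem stmt_10 (w : ℕ) (l s₀ s₁ : List ℕ) (hl : ∀ x ∈ l, x < 2 ^ (w + 1))
    (h₀ : s₀.Perm (l.filter (fun a => !a.testBit w)))
    (h₁ : s₁.Perm (l.filter (fun a => a.testBit w)))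
    (hs₀ : s₀.Pairwise (· ≤ ·)) (hs₁ : s₁.Pairwise (· ≤ ·)) :
    (s₀ ++ s₁).Pairwise (· ≤ ·) ∧ (s₀ ++ s₁).Perm l := by
  constructor
  · refine List.pairwise_append.2 ⟨hs₀, hs₁, ?_⟩
    intro x hx y hy
    have hx' := h₀.subset hx
    have hy' := h₁.subset hy
    rw [List.mem_filter] at hx' hy'
    have hxb : x.testBit w = false := by simpa using hx'.2
    have hyb : y.testBit w = true := by simpa using hy'.2
    have hyge : 2 ^ w ≤ y := Nat.ge_two_pow_of_testBit hyb
    have hd : x / 2 ^ w % 2 ≠ 1 := by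
      simpa [Nat.testBit_eq_decide_div_mod_eq] using hxb
    have h2 : x < 2 ^ w * 2 := by
      have := hl x hx'.1
      calc x < 2 ^ (w + 1) := this
      _ = 2 ^ w * 2 := by ring
    have hlt2 : x / 2 ^ w < 2 := Nat.div_lt_of_lt_mul h2
    have hx0 : x / 2 ^ w = 0 := by
      generalize hq : x / 2 ^ w = q at hd hlt2 ⊢
      omega
    have hxlt : x < 2 ^ w :=
      (Nat.div_eq_zero_iff.1 hx0).resolve_left (Nat.pow_pos (n := w) (by norm_num : 0 < 2)).ne'
    omega
  · refine (h₀.append h₁).trans ?_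
    have heq : l.filter (fun a => a.testBit w) = l.filter (fun a => !(!a.testBit w)) := by
      simp
    rw [heq]
    exact List.filter_append_perm _ l
end

section
/- For signed integers in the range [-2^(w-1), 2^(w-1)), the map sending x to its two's complement representation with the sign bit flipped, i.e., x ↦ (x mod 2^w) XOR 2^(w-1), is a strictly monotone bijection onto [0, 2^w). -/
lemma xor_two_pow_of_lt {k n : ℕ} (h : n < 2 ^ k) : n ^^^ 2 ^ k = n + 2 ^ k := by
  have hor : 2 ^ k + n = 2 ^ k ||| n := by
    have := Nat.two_pow_add_eq_or_of_lt (i := k) h 1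
    simpa using this
  rw [Nat.add_comm n, hor]
  apply Nat.eq_of_testBit_eq
  intro i
  simp only [Nat.testBit_xor, Nat.testBit_or]
  rcases lt_or_ge i k with hi | hi
  · rw [Nat.testBit_two_pow_of_ne (by omega)]
    simp
  · have hn : n.testBit i = false :=
      Nat.testBit_lt_two_pow (lt_of_lt_of_le h (Nat.pow_le_pow_right (by norm_num) hi))
    rw [hn]
    cases (2 ^ k).testBit i <;> simp

theorem stmt_11 (w : ℕ) (hw : 1 ≤ w) :
    StrictMonoOn (fun x : ℤ => (x % 2 ^ w).toNat ^^^ 2 ^ (w - 1))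
        (Set.Ico (-(2 ^ (w - 1))) (2 ^ (w - 1))) ∧
    Set.BijOn (fun x : ℤ => (x % 2 ^ w).toNat ^^^ 2 ^ (w - 1))
        (Set.Ico (-(2 ^ (w - 1))) (2 ^ (w - 1))) (Set.Iio (2 ^ w)) := by
  set k := w - 1 with hk
  have hwk : w = k + 1 := by omega
  have h2w : (2 : ℤ) ^ w = 2 * 2 ^ k := by rw [hwk, pow_succ]; ring
  have h2wn : (2 : ℕ) ^ w = 2 * 2 ^ k := by rw [hwk, pow_succ]; ring
  have hpos : (0 : ℤ) < 2 ^ k := by positivity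
  have hcast : ((2 ^ k : ℕ) : ℤ) = 2 ^ k := by push_cast; ring
  -- the function equals x ↦ (x + 2^k).toNat on the set
  have key : ∀ x ∈ Set.Ico (-(2 ^ k : ℤ)) (2 ^ k),
      (x % 2 ^ w).toNat ^^^ 2 ^ k = (x + 2 ^ k).toNat := by
    rintro x ⟨hx1, hx2⟩
    rcases le_or_gt 0 x with hx | hx
    · have hmod : x % 2 ^ w = x := Int.emod_eq_of_lt hx (by rw [h2w]; linarith)
      rw [hmod]
      have hlt : x.toNat < 2 ^ k := by omega
      rw [xor_two_pow_of_lt hlt]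
      omega
    · have hmod : x % 2 ^ w = x + 2 ^ w := by
        rw [← Int.add_mul_emod_self_left (b := 2 ^ w) (c := 1), mul_one]
        exact Int.emod_eq_of_lt (by rw [h2w]; linarith) (by rw [h2w]; linarith)
      rw [hmod]
      set m : ℕ := (x + 2 ^ k).toNat with hm
      have hmlt : m < 2 ^ k := by
        have hlt : (x + 2 ^ k) < 2 ^ k := by linarith
        omega
      have hval : (x + 2 ^ w).toNat = m + 2 ^ k := by
        rw [h2w] at *; omega
      rw [hval, ← xor_two_pow_of_lt hmlt, Nat.xor_assoc, Nat.xor_self, Nat.xor_zero]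
  have hmono : StrictMonoOn (fun x : ℤ => (x % 2 ^ w).toNat ^^^ 2 ^ k)
      (Set.Ico (-(2 ^ k : ℤ)) (2 ^ k)) := by
    intro x hx y hy hxy
    show (x % 2 ^ w).toNat ^^^ 2 ^ k < (y % 2 ^ w).toNat ^^^ 2 ^ k
    rw [key x hx, key y hy]
    have hx0 : -(2 ^ k : ℤ) ≤ x := hx.1
    have hy0 : -(2 ^ k : ℤ) ≤ y := hy.1
    omega
  refine ⟨hmono, ⟨?_, hmono.injOn, ?_⟩⟩
  · intro x hx
    show (x % 2 ^ w).toNat ^^^ 2 ^ k ∈ Set.Iio (2 ^ w)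
    rw [Set.mem_Iio, key x hx, h2wn]
    have h1 := hx.1
    have h2 := hx.2
    omega
  · intro n hn
    rw [Set.mem_Iio] at hn
    have hn' : (n : ℤ) < 2 * 2 ^ k := by
      have : (n : ℤ) < 2 ^ w := by exact_mod_cast hn
      rw [h2w] at this; exact this
    have hmem : ((n : ℤ) - 2 ^ k) ∈ Set.Ico (-(2 ^ k : ℤ)) (2 ^ k) := by
      constructor
      · omega
      · omega
    refine ⟨(n : ℤ) - 2 ^ k, hmem, ?_⟩
    show (((n : ℤ) - 2 ^ k) % 2 ^ w).toNat ^^^ 2 ^ k = n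
    rw [key _ hmem]
    omega
end
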